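/- For every n ≥ 3, the root system of type C_n, realized as {±2e_i : 1 ≤ i ≤ n} ∪ {±e_i ± e_j : 1 ≤ i < j ≤ n} ⊆ ℤ^n, admits no partition into m ≥ 3 nonempty parts Δ_1, …, Δ_m such that each Δ_i and each Δ_i ⊔ Δ_j is closed. -/
import Mathlib


/-- Standard basis vector `e i` in `ℤ^n`. -/
def eb {n : ℕ} (i : Fin n) : Fin n → ℤ := fun k => if k = i then 1 else 0

/-- A subset `S` of a root system `Δ` is closed if `α, β ∈ S` and `α + β ∈ Δ`
imply `α + β ∈ S`. -/
def RootClosed {n : ℕ} (Δ S : Set (Fin n → ℤ)) : Prop :=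
  ∀ a ∈ S, ∀ b ∈ S, a + b ∈ Δ → a + b ∈ S

/-- The root system of type `C_n`: long roots `±2e_i` and short roots `±e_i ± e_j`
for `i < j`. -/
def rootsC (n : ℕ) : Set (Fin n → ℤ) :=
  {v | (∃ i, v = (2 : ℤ) • eb i ∨ v = -((2 : ℤ) • eb i)) ∨
       (∃ i j, i < j ∧ (v = eb i + eb j ∨ v = eb i - eb j ∨
                        v = -eb i + eb j ∨ v = -eb i - eb j))}

section Aux

variable {n : ℕ}

lemma memC_long (i : Fin n) {ε : ℤ} (hε : ε = 1 ∨ ε = -1) :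
    (2 * ε) • eb i ∈ rootsC n := by
  rcases hε with rfl | rfl
  · exact Or.inl ⟨i, Or.inl (by module)⟩
  · exact Or.inl ⟨i, Or.inr (by module)⟩

lemma memC_short {i j : Fin n} (hij : i ≠ j) {ε δ : ℤ}
    (hε : ε = 1 ∨ ε = -1) (hδ : δ = 1 ∨ δ = -1) :
    ε • eb i + δ • eb j ∈ rootsC n := by
  rcases lt_or_gt_of_ne hij with h | h
  · refine Or.inr ⟨i, j, h, ?_⟩
    rcases hε with rfl | rfl <;> rcases hδ with rfl | rfl
    · exact Or.inl (by module)
    · exact Or.inr (Or.inl (by module))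
    · exact Or.inr (Or.inr (Or.inl (by module)))
    · exact Or.inr (Or.inr (Or.inr (by module)))
  · refine Or.inr ⟨j, i, h, ?_⟩
    rcases hε with rfl | rfl <;> rcases hδ with rfl | rfl
    · exact Or.inl (by module)
    · exact Or.inr (Or.inr (Or.inl (by module)))
    · exact Or.inr (Or.inl (by module))
    · exact Or.inr (Or.inr (Or.inr (by module)))

lemma memC_decomp {v : Fin n → ℤ} (hv : v ∈ rootsC n) :
    (∃ (i : Fin n) (δ : ℤ), (δ = 1 ∨ δ = -1) ∧ v = (2 * δ) • eb i) ∨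
    (∃ (i j : Fin n) (ε δ : ℤ), i ≠ j ∧ (ε = 1 ∨ ε = -1) ∧ (δ = 1 ∨ δ = -1) ∧
      v = ε • eb i + δ • eb j) := by
  simp only [rootsC, Set.mem_setOf_eq] at hv
  rcases hv with ⟨i, h | h⟩ | ⟨i, j, hij, (h | h | h | h)⟩
  · exact Or.inl ⟨i, 1, Or.inl rfl, by rw [h]; module⟩
  · exact Or.inl ⟨i, -1, Or.inr rfl, by rw [h]; module⟩
  · exact Or.inr ⟨i, j, 1, 1, hij.ne, Or.inl rfl, Or.inl rfl, by rw [h]; module⟩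
  · exact Or.inr ⟨i, j, 1, -1, hij.ne, Or.inl rfl, Or.inr rfl, by rw [h]; module⟩
  · exact Or.inr ⟨i, j, -1, 1, hij.ne, Or.inr rfl, Or.inl rfl, by rw [h]; module⟩
  · exact Or.inr ⟨i, j, -1, -1, hij.ne, Or.inr rfl, Or.inr rfl, by rw [h]; module⟩

lemma two_colors {m : ℕ} (hn : 3 ≤ n) {c : (Fin n → ℤ) → Fin m}
    (rule : ∀ a ∈ rootsC n, ∀ b ∈ rootsC n, a + b ∈ rootsC n →
      c (a + b) = c a ∨ c (a + b) = c b) :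
    ∃ A B : Fin m, ∀ v ∈ rootsC n, c v = A ∨ c v = B := by
  have R1i : ∀ (i j : Fin n), i ≠ j → ∀ (ε δ δ' : ℤ), δ + δ' = 0 →
      (ε = 1 ∨ ε = -1) → (δ = 1 ∨ δ = -1) →
      c ((2 * ε) • eb i) = c (ε • eb i + δ • eb j) ∨
      c ((2 * ε) • eb i) = c (ε • eb i + δ' • eb j) := by
    intro i j hij ε δ δ' hδδ' hε hδ
    have hδ'e : δ' = -δ := by linarith
    subst hδ'e
    have hδ' : -δ = 1 ∨ -δ = -1 := by rcases hδ with rfl | rfl <;> norm_num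
    have key : (ε • eb i + δ • eb j) + (ε • eb i + (-δ) • eb j) = (2 * ε) • eb i := by
      module
    have h := rule _ (memC_short hij hε hδ) _ (memC_short hij hε hδ')
      (by rw [key]; exact memC_long i hε)
    rw [key] at h
    exact h
  have R1j : ∀ (i j : Fin n), i ≠ j → ∀ (ε ε' δ : ℤ), ε + ε' = 0 →
      (ε = 1 ∨ ε = -1) → (δ = 1 ∨ δ = -1) →
      c ((2 * δ) • eb j) = c (ε • eb i + δ • eb j) ∨
      c ((2 * δ) • eb j) = c (ε' • eb i + δ • eb j) := by
    intro i j hij ε ε' δ hεε' hε hδ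
    have hε'e : ε' = -ε := by linarith
    subst hε'e
    have hε' : -ε = 1 ∨ -ε = -1 := by rcases hε with rfl | rfl <;> norm_num
    have key : (ε • eb i + δ • eb j) + ((-ε) • eb i + δ • eb j) = (2 * δ) • eb j := by
      module
    have h := rule _ (memC_short hij hε hδ) _ (memC_short hij hε' hδ)
      (by rw [key]; exact memC_long j hδ)
    rw [key] at h
    exact h
  have R2i : ∀ (i j : Fin n), i ≠ j → ∀ (ε ε' δ : ℤ), ε + ε' = 0 →
      (ε = 1 ∨ ε = -1) → (δ = 1 ∨ δ = -1) →
      c (ε • eb i + δ • eb j) = c ((2 * ε) • eb i) ∨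
      c (ε • eb i + δ • eb j) = c (ε' • eb i + δ • eb j) := by
    intro i j hij ε ε' δ hεε' hε hδ
    have hε'e : ε' = -ε := by linarith
    subst hε'e
    have hε' : -ε = 1 ∨ -ε = -1 := by rcases hε with rfl | rfl <;> norm_num
    have key : (2 * ε) • eb i + ((-ε) • eb i + δ • eb j) = ε • eb i + δ • eb j := by
      module
    have h := rule _ (memC_long i hε) _ (memC_short hij hε' hδ)
      (by rw [key]; exact memC_short hij hε hδ)
    rw [key] at h
    exact h
  have R2j : ∀ (i j : Fin n), i ≠ j → ∀ (ε δ δ' : ℤ), δ + δ' = 0 →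
      (ε = 1 ∨ ε = -1) → (δ = 1 ∨ δ = -1) →
      c (ε • eb i + δ • eb j) = c ((2 * δ) • eb j) ∨
      c (ε • eb i + δ • eb j) = c (ε • eb i + δ' • eb j) := by
    intro i j hij ε δ δ' hδδ' hε hδ
    have hδ'e : δ' = -δ := by linarith
    subst hδ'e
    have hδ' : -δ = 1 ∨ -δ = -1 := by rcases hδ with rfl | rfl <;> norm_num
    have key : (2 * δ) • eb j + (ε • eb i + (-δ) • eb j) = ε • eb i + δ • eb j := by
      module
    have h := rule _ (memC_long j hδ) _ (memC_short hij hε hδ')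
      (by rw [key]; exact memC_short hij hε hδ)
    rw [key] at h
    exact h
  -- each short root has the colour of one of its endpoint long roots
  have claimA : ∀ (i j : Fin n), i ≠ j → ∀ (ε δ : ℤ),
      (ε = 1 ∨ ε = -1) → (δ = 1 ∨ δ = -1) →
      c (ε • eb i + δ • eb j) = c ((2 * ε) • eb i) ∨
      c (ε • eb i + δ • eb j) = c ((2 * δ) • eb j) := by
    intro i j hij ε δ hε hδ
    by_contra hcon
    push_neg at hcon
    obtain ⟨h1, h2⟩ := hcon
    have hu := (R2j i j hij ε δ (-δ) (by ring) hε hδ).resolve_left h2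
    rcases R1i i j hij ε δ (-δ) (by ring) hε hδ with h | h
    · exact h1 h.symm
    · rw [← hu] at h
      exact h1 h.symm
  -- two symmetric indices have the same long colour
  have claimII : ∀ (i j : Fin n), i ≠ j →
      c ((2 * 1 : ℤ) • eb i) = c ((2 * (-1) : ℤ) • eb i) →
      c ((2 * 1 : ℤ) • eb j) = c ((2 * (-1) : ℤ) • eb j) →
      c ((2 * 1 : ℤ) • eb i) = c ((2 * 1 : ℤ) • eb j) := by
    intro i j hij hi hj
    have h1 := R2i i j hij 1 (-1) 1 (by ring) (Or.inl rfl) (Or.inl rfl)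
    have h2 := R2i i j hij (-1) 1 1 (by ring) (Or.inr rfl) (Or.inl rfl)
    have hst : c ((1 : ℤ) • eb i + (1 : ℤ) • eb j) = c ((-1 : ℤ) • eb i + (1 : ℤ) • eb j) := by
      rcases h1 with h1 | h1
      · rcases h2 with h2 | h2
        · rw [h1, h2, ← hi]
        · exact h2.symm
      · exact h1
    have h3 := R2j i j hij 1 1 (-1) (by ring) (Or.inl rfl) (Or.inl rfl)
    have h4 := R2j i j hij 1 (-1) 1 (by ring) (Or.inl rfl) (Or.inr rfl)
    have hsu : c ((1 : ℤ) • eb i + (1 : ℤ) • eb j) = c ((1 : ℤ) • eb i + (-1 : ℤ) • eb j) := by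
      rcases h3 with h3 | h3
      · rcases h4 with h4 | h4
        · rw [h3, h4, ← hj]
        · exact h4.symm
      · exact h3
    have h5 := R1i i j hij 1 1 (-1) (by ring) (Or.inl rfl) (Or.inl rfl)
    have hx : c ((2 * 1 : ℤ) • eb i) = c ((1 : ℤ) • eb i + (1 : ℤ) • eb j) := by
      rcases h5 with h5 | h5
      · exact h5
      · rw [h5, ← hsu]
    have h6 := R1j i j hij 1 (-1) 1 (by ring) (Or.inl rfl) (Or.inl rfl)
    have hy : c ((2 * 1 : ℤ) • eb j) = c ((1 : ℤ) • eb i + (1 : ℤ) • eb j) := by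
      rcases h6 with h6 | h6
      · exact h6
      · rw [h6, ← hst]
    rw [hx, hy]
  -- an asymmetric index bounds all long colours
  have claimI : ∀ (i j : Fin n), i ≠ j → ∀ δ : ℤ, (δ = 1 ∨ δ = -1) →
      c ((2 * 1 : ℤ) • eb i) ≠ c ((2 * (-1) : ℤ) • eb i) →
      c ((2 * δ) • eb j) = c ((2 * 1 : ℤ) • eb i) ∨
      c ((2 * δ) • eb j) = c ((2 * (-1) : ℤ) • eb i) := by
    intro i j hij δ hδ hxy
    by_contra hcon
    push_neg at hcon
    obtain ⟨hzx, hzy⟩ := hcon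
    have hδ' : -δ = 1 ∨ -δ = -1 := by rcases hδ with rfl | rfl <;> norm_num
    have hs := R2i i j hij 1 (-1) δ (by ring) (Or.inl rfl) hδ
    have ht := R2i i j hij (-1) 1 δ (by ring) (Or.inr rfl) hδ
    have hz := R1j i j hij 1 (-1) δ (by ring) (Or.inl rfl) hδ
    by_cases hst : c ((1 : ℤ) • eb i + δ • eb j) = c ((-1 : ℤ) • eb i + δ • eb j)
    · have hzs : c ((2 * δ) • eb j) = c ((1 : ℤ) • eb i + δ • eb j) := by
        rcases hz with hz | hz
        · exact hz
        · rw [hz, ← hst]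
      have h5 := R1i i j hij 1 δ (-δ) (by ring) (Or.inl rfl) hδ
      have hux : c ((1 : ℤ) • eb i + (-δ) • eb j) = c ((2 * 1 : ℤ) • eb i) := by
        rcases h5 with h5 | h5
        · exact absurd (hzs.trans h5.symm) hzx
        · exact h5.symm
      have h6 := R1i i j hij (-1) δ (-δ) (by ring) (Or.inr rfl) hδ
      have hvy : c ((-1 : ℤ) • eb i + (-δ) • eb j) = c ((2 * (-1) : ℤ) • eb i) := by
        rcases h6 with h6 | h6
        · exact absurd (hzs.trans (hst.trans h6.symm)) hzy
        · exact h6.symm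
      have h7 := R2j i j hij 1 (-δ) δ (by ring) (Or.inl rfl) hδ'
      have hw : c ((2 * (-δ)) • eb j) = c ((2 * 1 : ℤ) • eb i) := by
        rcases h7 with h7 | h7
        · exact h7.symm.trans hux
        · exact absurd (hzs.trans (h7.symm.trans hux)) hzx
      have h8 := R2j i j hij (-1) (-δ) δ (by ring) (Or.inr rfl) hδ'
      rcases h8 with h8 | h8
      · exact hxy ((hvy.symm.trans (h8.trans hw)).symm)
      · exact hzy ((hzs.trans (hst.trans h8.symm)).trans hvy)
    · have hsx : c ((1 : ℤ) • eb i + δ • eb j) = c ((2 * 1 : ℤ) • eb i) :=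
        hs.resolve_right hst
      have hty : c ((-1 : ℤ) • eb i + δ • eb j) = c ((2 * (-1) : ℤ) • eb i) := by
        rcases ht with ht | ht
        · exact ht
        · exact absurd ht.symm hst
      rcases hz with hz | hz
      · exact hzx (hz.trans hsx)
      · exact hzy (hz.trans hty)
  -- assemble
  have hn0 : 0 < n := by omega
  by_cases hsym : ∀ i : Fin n, c ((2 * 1 : ℤ) • eb i) = c ((2 * (-1) : ℤ) • eb i)
  · refine ⟨c ((2 * 1 : ℤ) • eb (⟨0, hn0⟩ : Fin n)),
      c ((2 * 1 : ℤ) • eb (⟨0, hn0⟩ : Fin n)), ?_⟩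
    have hlong : ∀ (j : Fin n) (δ : ℤ), (δ = 1 ∨ δ = -1) →
        c ((2 * δ) • eb j) = c ((2 * 1 : ℤ) • eb (⟨0, hn0⟩ : Fin n)) := by
      intro j δ hδ
      have h1 : c ((2 * 1 : ℤ) • eb j) = c ((2 * 1 : ℤ) • eb (⟨0, hn0⟩ : Fin n)) := by
        by_cases hji : j = (⟨0, hn0⟩ : Fin n)
        · rw [hji]
        · exact claimII j _ hji (hsym j) (hsym _)
      rcases hδ with rfl | rfl
      · exact h1
      · rw [← hsym j]; exact h1
    intro v hv
    left
    rcases memC_decomp hv with ⟨i, δ, hδ, rfl⟩ | ⟨i, j, ε, δ, hij, hε, hδ, rfl⟩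
    · exact hlong i δ hδ
    · rcases claimA i j hij ε δ hε hδ with h | h
      · rw [h]; exact hlong i ε hε
      · rw [h]; exact hlong j δ hδ
  · push_neg at hsym
    obtain ⟨i, hxy⟩ := hsym
    refine ⟨c ((2 * 1 : ℤ) • eb i), c ((2 * (-1) : ℤ) • eb i), ?_⟩
    have hlong : ∀ (j : Fin n) (δ : ℤ), (δ = 1 ∨ δ = -1) →
        c ((2 * δ) • eb j) = c ((2 * 1 : ℤ) • eb i) ∨
        c ((2 * δ) • eb j) = c ((2 * (-1) : ℤ) • eb i) := by
      intro j δ hδ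
      by_cases hji : j = i
      · subst hji
        rcases hδ with rfl | rfl
        · exact Or.inl rfl
        · exact Or.inr rfl
      · exact claimI i j (fun h => hji h.symm) δ hδ hxy
    intro v hv
    rcases memC_decomp hv with ⟨p, δ, hδ, rfl⟩ | ⟨p, q, ε, δ, hpq, hε, hδ, rfl⟩
    · exact hlong p δ hδ
    · rcases claimA p q hpq ε δ hε hδ with h | h
      · rw [h]; exact hlong p ε hε
      · rw [h]; exact hlong q δ hδ

end Aux

theorem stmt6 (n : ℕ) (hn : 3 ≤ n) (m : ℕ) (hm : 3 ≤ m) :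
    ¬ ∃ P : Fin m → Set (Fin n → ℤ),
      (⋃ i, P i) = rootsC n ∧
      (∀ i, (P i).Nonempty) ∧
      (Pairwise fun i j => Disjoint (P i) (P j)) ∧
      (∀ i, RootClosed (rootsC n) (P i)) ∧
      (∀ i j, i ≠ j → RootClosed (rootsC n) (P i ∪ P j)) := by
  rintro ⟨P, hU, hne, hdisj, hcl, hcl2⟩
  classical
  have hm0 : 0 < m := by omega
  have exmem : ∀ v ∈ rootsC n, ∃ i, v ∈ P i := by
    intro v hv
    rw [← hU] at hv
    exact Set.mem_iUnion.mp hv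
  have hch : ∀ v : Fin n → ℤ, ∃ i : Fin m, v ∈ rootsC n → v ∈ P i := by
    intro v
    by_cases hv : v ∈ rootsC n
    · obtain ⟨i, hi⟩ := exmem v hv
      exact ⟨i, fun _ => hi⟩
    · exact ⟨⟨0, hm0⟩, fun h => absurd h hv⟩
  choose c hc using hch
  have hsub : ∀ i, P i ⊆ rootsC n := fun i => hU ▸ Set.subset_iUnion P i
  have huniq : ∀ v i, v ∈ P i → c v = i := by
    intro v i hvi
    by_contra hne'
    exact Set.disjoint_left.mp (hdisj hne') (hc v (hsub i hvi)) hvi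
  have rule : ∀ a ∈ rootsC n, ∀ b ∈ rootsC n, a + b ∈ rootsC n →
      c (a + b) = c a ∨ c (a + b) = c b := by
    intro a ha b hb hab
    by_cases h : c a = c b
    · exact Or.inl (huniq _ _ (hcl (c a) a (hc a ha) b (by rw [h]; exact hc b hb) hab))
    · rcases hcl2 (c a) (c b) h a (Set.mem_union_left _ (hc a ha)) b
        (Set.mem_union_right _ (hc b hb)) hab with h1 | h1
      · exact Or.inl (huniq _ _ h1)
      · exact Or.inr (huniq _ _ h1)
  obtain ⟨A, B, hAB⟩ := two_colors hn rule
  have key : ∀ k : Fin m, k = A ∨ k = B := by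
    intro k
    obtain ⟨v, hv⟩ := hne k
    have h := hAB v (hsub k hv)
    rwa [huniq v k hv] at h
  have ne01 : (⟨0, by omega⟩ : Fin m) ≠ ⟨1, by omega⟩ := by simp [Fin.ext_iff]
  have ne02 : (⟨0, by omega⟩ : Fin m) ≠ ⟨2, by omega⟩ := by simp [Fin.ext_iff]
  have ne12 : (⟨1, by omega⟩ : Fin m) ≠ ⟨2, by omega⟩ := by simp [Fin.ext_iff]
  rcases key ⟨0, by omega⟩ with h0 | h0 <;> rcases key ⟨1, by omega⟩ with h1 | h1 <;>
      rcases key ⟨2, by omega⟩ with h2 | h2 <;>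
    first
      | exact ne01 (h0.trans h1.symm)
      | exact ne02 (h0.trans h2.symm)
      | exact ne12 (h1.trans h2.symm)
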